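/- The Sugeno-type trace ψ_α(a) := max_{i=1,...,n} min(λ_i(a), α(i)) is monotone on positive semidefinite matrices: if 0 ≤ a ≤ b in Mₙ(ℂ), then ψ_α(a) ≤ ψ_α(b). -/

import Mathlib

open Matrix BigOperators Finset
open scoped ComplexOrder

/-- The `i`-th largest eigenvalue (0-indexed) of a Hermitian matrix. -/
noncomputable def eigDesc {n : ℕ} (a : Matrix (Fin n) (Fin n) ℂ) (ha : a.IsHermitian) (i : Fin n) : ℝ :=
  ha.eigenvalues (Tuple.sort ha.eigenvalues i.rev)

/-- Eigenvalues in decreasing order, extended by `0` beyond the size. `eigN a ha i = λ_{i+1}(a)`. -/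
noncomputable def eigN {n : ℕ} (a : Matrix (Fin n) (Fin n) ℂ) (ha : a.IsHermitian) (i : ℕ) : ℝ :=
  if h : i < n then eigDesc a ha ⟨i, h⟩ else 0

/-- The non-linear trace of Choquet type:
`φ_α(a) = ∑_{i=1}^{n-1} (λ_i(a) - λ_{i+1}(a)) α(i) + λ_n(a) α(n)`. -/
noncomputable def choquetTrace {n : ℕ} (α : ℕ → ℝ) (a : Matrix (Fin n) (Fin n) ℂ)
    (ha : a.IsHermitian) : ℝ :=
  ∑ i ∈ Finset.range n, (eigN a ha i - eigN a ha (i + 1)) * α (i + 1)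

/-- Functional calculus of a Hermitian matrix `a` by a function `f : ℝ → ℝ` on its eigenvalues. -/
noncomputable def funCalc {n : ℕ} (f : ℝ → ℝ) (a : Matrix (Fin n) (Fin n) ℂ)
    (ha : a.IsHermitian) : Matrix (Fin n) (Fin n) ℂ :=
  (ha.eigenvectorUnitary : Matrix (Fin n) (Fin n) ℂ) *
    Matrix.diagonal (fun i => (f (ha.eigenvalues i) : ℂ)) *
    star (ha.eigenvectorUnitary : Matrix (Fin n) (Fin n) ℂ)

/-- The square root of a positive semidefinite matrix, as Mathlib (Dec 2024) defined
`Matrix.PosSemidef.sqrt`; removed from current Mathlib, restated here verbatim. -/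
noncomputable def Matrix.PosSemidef.sqrt {m 𝕜 : Type*} [Fintype m] [DecidableEq m] [RCLike 𝕜]
    {A : Matrix m m 𝕜} (hA : A.PosSemidef) : Matrix m m 𝕜 :=
  (hA.1.eigenvectorUnitary : Matrix m m 𝕜) * diagonal ((↑) ∘ Real.sqrt ∘ hA.1.eigenvalues) *
    (star hA.1.eigenvectorUnitary : Matrix m m 𝕜)

/-- The absolute value `|a| = (a^* a)^{1/2}` of a matrix. -/
noncomputable def matAbs {n : ℕ} (a : Matrix (Fin n) (Fin n) ℂ) : Matrix (Fin n) (Fin n) ℂ :=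
  (Matrix.posSemidef_conjTranspose_mul_self a).sqrt

theorem matAbs_isHermitian {n : ℕ} (a : Matrix (Fin n) (Fin n) ℂ) : (matAbs a).IsHermitian :=
  by
    unfold matAbs Matrix.PosSemidef.sqrt
    simp [IsHermitian, conjTranspose_mul, Matrix.mul_assoc, diagonal_conjTranspose, Function.comp_def,
      Matrix.star_eq_conjTranspose, Pi.star_def, Complex.star_def, Complex.conj_ofReal]

/-- The non-linear trace of Sugeno type: `ψ_α(a) = ⋁_{i=1}^n (λ_i(a) ∧ α(i))`. -/
noncomputable def sugeno {n : ℕ} [NeZero n] (α : ℕ → ℝ) (a : Matrix (Fin n) (Fin n) ℂ)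
    (ha : a.IsHermitian) : ℝ :=
  Finset.univ.sup' Finset.univ_nonempty fun i : Fin n => min (eigDesc a ha i) (α (i + 1))

namespace Stmt15Aux


variable {n : ℕ}

noncomputable def Umat (a : Matrix (Fin n) (Fin n) ℂ) (ha : a.IsHermitian) :
    Matrix (Fin n) (Fin n) ℂ := (ha.eigenvectorUnitary : Matrix (Fin n) (Fin n) ℂ)

lemma star_mul_Umat (a : Matrix (Fin n) (Fin n) ℂ) (ha : a.IsHermitian) :
    star (Umat a ha) * Umat a ha = 1 := (Unitary.mem_iff.mp ha.eigenvectorUnitary.2).1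

lemma Umat_mul_star (a : Matrix (Fin n) (Fin n) ℂ) (ha : a.IsHermitian) :
    Umat a ha * star (Umat a ha) = 1 := (Unitary.mem_iff.mp ha.eigenvectorUnitary.2).2

noncomputable def coords (a : Matrix (Fin n) (Fin n) ℂ) (ha : a.IsHermitian)
    (x : Fin n → ℂ) : Fin n → ℂ := star (Umat a ha) *ᵥ x

lemma star_coords (a : Matrix (Fin n) (Fin n) ℂ) (ha : a.IsHermitian) (x : Fin n → ℂ) :
    star (coords a ha x) = star x ᵥ* Umat a ha := by
  unfold coords
  rw [star_mulVec, Matrix.star_eq_conjTranspose, conjTranspose_conjTranspose]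

lemma sum_normSq_coords (a : Matrix (Fin n) (Fin n) ℂ) (ha : a.IsHermitian) (x : Fin n → ℂ) :
    ((∑ j, Complex.normSq (coords a ha x j) : ℝ) : ℂ) = star x ⬝ᵥ x := by
  have h1 : star (coords a ha x) ⬝ᵥ coords a ha x = star x ⬝ᵥ x := by
    rw [star_coords]
    unfold coords
    rw [← dotProduct_mulVec, mulVec_mulVec, Umat_mul_star, one_mulVec]
  rw [← h1]
  push_cast
  refine Finset.sum_congr rfl fun j _ => ?_
  simp [Complex.normSq_eq_conj_mul_self, Pi.star_apply]

lemma quadForm_eq (a : Matrix (Fin n) (Fin n) ℂ) (ha : a.IsHermitian) (x : Fin n → ℂ) :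
    star x ⬝ᵥ (a *ᵥ x) =
      ((∑ j, ha.eigenvalues j * Complex.normSq (coords a ha x j) : ℝ) : ℂ) := by
  conv_lhs => rw [ha.spectral_theorem, Unitary.conjStarAlgAut_apply]
  rw [← mulVec_mulVec, ← mulVec_mulVec]
  rw [dotProduct_mulVec (star x)]
  have hsx : star x ᵥ* (ha.eigenvectorUnitary : Matrix (Fin n) (Fin n) ℂ)
      = star (coords a ha x) := (star_coords a ha x).symm
  rw [hsx]
  push_cast
  refine Eq.trans (Finset.sum_congr rfl fun j _ => ?_) rfl
  simp only [mulVec_diagonal, Pi.star_apply, Function.comp_apply]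
  rw [Complex.normSq_eq_conj_mul_self]
  show starRingEnd ℂ (coords a ha x j) * ((ha.eigenvalues j : ℂ) * coords a ha x j) = _
  ring


/-- Span of a set of columns of the eigenvector unitary. -/
noncomputable def eigSpan (a : Matrix (Fin n) (Fin n) ℂ) (ha : a.IsHermitian)
    (S : Finset (Fin n)) : Submodule ℂ (Fin n → ℂ) :=
  Submodule.span ℂ ((fun j => (Umat a ha)ᵀ j) '' (S : Set (Fin n)))

lemma coords_eq_zero_of_mem_eigSpan (a : Matrix (Fin n) (Fin n) ℂ) (ha : a.IsHermitian)
    (S : Finset (Fin n)) {x : Fin n → ℂ} (hx : x ∈ eigSpan a ha S)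
    {j : Fin n} (hj : j ∉ S) : coords a ha x j = 0 := by
  induction hx using Submodule.span_induction with
  | mem v hv =>
    obtain ⟨j', hj', rfl⟩ := hv
    have key : coords a ha ((Umat a ha)ᵀ j') j = (star (Umat a ha) * Umat a ha) j j' := by
      simp [coords, Matrix.mulVec, Matrix.mul_apply, dotProduct, Matrix.transpose_apply]
    rw [key, star_mul_Umat, Matrix.one_apply_ne (fun h : j = j' => hj (h ▸ hj'))]
  | zero => simp [coords]
  | add v w _ _ hv hw => simp [coords, Matrix.mulVec_add] at hv hw ⊢; simp [hv, hw]
  | smul c v _ hv => simp [coords, Matrix.mulVec_smul] at hv ⊢; simp [hv]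

lemma finrank_eigSpan (a : Matrix (Fin n) (Fin n) ℂ) (ha : a.IsHermitian)
    (S : Finset (Fin n)) : Module.finrank ℂ (eigSpan a ha S) = S.card := by
  have hU : IsUnit (Umat a ha) := ⟨⟨Umat a ha, star (Umat a ha), Umat_mul_star a ha, star_mul_Umat a ha⟩, rfl⟩
  have hli : LinearIndependent ℂ (fun j : {j // j ∈ S} => (Umat a ha)ᵀ (j : Fin n)) :=
    (Matrix.linearIndependent_cols_iff_isUnit.mpr hU).comp Subtype.val Subtype.val_injective
  have him : Set.range (fun j : {j // j ∈ S} => (Umat a ha)ᵀ (j : Fin n))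
      = (fun j => (Umat a ha)ᵀ j) '' (S : Set (Fin n)) := by
    ext v; simp [Set.mem_image]
  rw [eigSpan, ← him, finrank_span_eq_card hli, Fintype.card_coe]

lemma exists_ne_zero_mem_inf (A B : Submodule ℂ (Fin n → ℂ))
    (h : n < Module.finrank ℂ A + Module.finrank ℂ B) :
    ∃ x : Fin n → ℂ, x ≠ 0 ∧ x ∈ A ⊓ B := by
  by_contra h'
  push_neg at h'
  have hd : Disjoint A B := by
    rw [disjoint_iff, Submodule.eq_bot_iff]
    intro x hx
    by_contra hx0
    exact (h' x hx0) hx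
  have := Submodule.finrank_add_finrank_le_of_disjoint hd
  rw [Module.finrank_fin_fun] at this
  omega


lemma weyl (a b : Matrix (Fin n) (Fin n) ℂ) (ha : a.IsHermitian) (hb : b.IsHermitian)
    (hab : (b - a).PosSemidef) (k : Fin n) :
    eigDesc a ha k ≤ eigDesc b hb k := by
  set σa := Tuple.sort ha.eigenvalues with hσa
  set σb := Tuple.sort hb.eigenvalues with hσb
  set Sa : Finset (Fin n) := (Finset.Ici k.rev).image σa with hSa
  set Sb : Finset (Fin n) := (Finset.Iic k.rev).image σb with hSb
  have cSa : Sa.card = n - (k.rev : ℕ) := by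
    rw [hSa, Finset.card_image_of_injective _ σa.injective, Fin.card_Ici]
  have cSb : Sb.card = (k.rev : ℕ) + 1 := by
    rw [hSb, Finset.card_image_of_injective _ σb.injective, Fin.card_Iic]
  obtain ⟨x, hx0, hxa, hxb⟩ := exists_ne_zero_mem_inf (eigSpan a ha Sa) (eigSpan b hb Sb) (by
    rw [finrank_eigSpan, finrank_eigSpan, cSa, cSb]
    have := k.rev.isLt; omega)
  set ra : Fin n → ℝ := fun j => Complex.normSq (coords a ha x j) with hra
  set rb : Fin n → ℝ := fun j => Complex.normSq (coords b hb x j) with hrb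
  set R : ℝ := (star x ⬝ᵥ x).re with hRdef
  have hRa : ∑ j, ra j = R := by
    rw [hRdef, ← sum_normSq_coords a ha x, Complex.ofReal_re]
  have hRb : ∑ j, rb j = R := by
    rw [hRdef, ← sum_normSq_coords b hb x, Complex.ofReal_re]
  have hRpos : 0 < R := by
    have hx' : ((∑ i, Complex.normSq (x i) : ℝ) : ℂ) = star x ⬝ᵥ x := by
      push_cast
      refine Finset.sum_congr rfl fun i _ => ?_
      simp [Complex.normSq_eq_conj_mul_self]
    rw [hRdef, ← hx', Complex.ofReal_re]
    obtain ⟨i, hi⟩ := Function.ne_iff.mp hx0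
    exact Finset.sum_pos' (fun i _ => Complex.normSq_nonneg _)
      ⟨i, Finset.mem_univ i, Complex.normSq_pos.mpr hi⟩
  have hra0 : ∀ j ∉ Sa, ra j = 0 := fun j hj => by
    rw [hra]; simp [coords_eq_zero_of_mem_eigSpan a ha Sa hxa hj]
  have hrb0 : ∀ j ∉ Sb, rb j = 0 := fun j hj => by
    rw [hrb]; simp [coords_eq_zero_of_mem_eigSpan b hb Sb hxb hj]
  have hla : ∀ j ∈ Sa, eigDesc a ha k ≤ ha.eigenvalues j := by
    intro j hj
    obtain ⟨j', hj', rfl⟩ := Finset.mem_image.mp hj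
    exact Tuple.monotone_sort ha.eigenvalues (Finset.mem_Ici.mp hj')
  have hlb : ∀ j ∈ Sb, hb.eigenvalues j ≤ eigDesc b hb k := by
    intro j hj
    obtain ⟨j', hj', rfl⟩ := Finset.mem_image.mp hj
    exact Tuple.monotone_sort hb.eigenvalues (Finset.mem_Iic.mp hj')
  have qa : (star x ⬝ᵥ (a *ᵥ x)).re = ∑ j, ha.eigenvalues j * ra j := by
    rw [quadForm_eq a ha x, Complex.ofReal_re]
  have qb : (star x ⬝ᵥ (b *ᵥ x)).re = ∑ j, hb.eigenvalues j * rb j := by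
    rw [quadForm_eq b hb x, Complex.ofReal_re]
  have hab' : (star x ⬝ᵥ (a *ᵥ x)).re ≤ (star x ⬝ᵥ (b *ᵥ x)).re := by
    have h0 := hab.dotProduct_mulVec_nonneg x
    rw [Matrix.sub_mulVec, dotProduct_sub] at h0
    have := (Complex.le_def.mp h0).1
    simp only [Complex.zero_re, Complex.sub_re] at this
    linarith
  have key : eigDesc a ha k * R ≤ eigDesc b hb k * R := by
    calc eigDesc a ha k * R = ∑ j ∈ Sa, eigDesc a ha k * ra j := by
          rw [← Finset.mul_sum]
          congr 1
          rw [← hRa]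
          exact (Finset.sum_subset (Finset.subset_univ Sa)
            (fun j _ hj => hra0 j hj)).symm
      _ ≤ ∑ j ∈ Sa, ha.eigenvalues j * ra j := by
          refine Finset.sum_le_sum fun j hj => ?_
          exact mul_le_mul_of_nonneg_right (hla j hj) (Complex.normSq_nonneg _)
      _ = ∑ j, ha.eigenvalues j * ra j := by
          refine Finset.sum_subset (Finset.subset_univ Sa) fun j _ hj => ?_
          rw [hra0 j hj, mul_zero]
      _ ≤ ∑ j, hb.eigenvalues j * rb j := by rw [← qa, ← qb]; exact hab'
      _ = ∑ j ∈ Sb, hb.eigenvalues j * rb j := by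
          refine (Finset.sum_subset (Finset.subset_univ Sb) fun j _ hj => ?_).symm
          rw [hrb0 j hj, mul_zero]
      _ ≤ ∑ j ∈ Sb, eigDesc b hb k * rb j := by
          refine Finset.sum_le_sum fun j hj => ?_
          exact mul_le_mul_of_nonneg_right (hlb j hj) (Complex.normSq_nonneg _)
      _ = eigDesc b hb k * R := by
          rw [← Finset.mul_sum]
          congr 1
          rw [← hRb]
          exact Finset.sum_subset (Finset.subset_univ Sb) (fun j _ hj => hrb0 j hj)
  exact le_of_mul_le_mul_right key hRpos

end Stmt15Aux

/-- the Sugeno-type trace is monotone for the Loewner order. -/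
theorem stmt15 (n : ℕ) [NeZero n] (α : ℕ → ℝ)
    (hnn : ∀ i : ℕ, 1 ≤ i → i ≤ n → 0 ≤ α i)
    (hmono : ∀ i j : ℕ, 1 ≤ i → i ≤ j → j ≤ n → α i ≤ α j)
    (a b : Matrix (Fin n) (Fin n) ℂ) (ha : a.PosSemidef) (hb : b.PosSemidef)
    (hab : (b - a).PosSemidef) :
    sugeno α a ha.1 ≤ sugeno α b hb.1 := by
  rw [sugeno, sugeno]
  refine Finset.sup'_le _ _ fun i _ => ?_
  refine le_trans (min_le_min (Stmt15Aux.weyl a b ha.1 hb.1 hab i) le_rfl) ?_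
  exact Finset.le_sup' (fun i : Fin n => min (eigDesc b hb.1 i) (α (i + 1)))
    (Finset.mem_univ i)
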